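/- arXiv:1805.00752 — 4 statements merged into one kernel-verified Lean document; each statement's English description precedes it below -/
import Mathlib

section
/- Let n ≥ 1 and let Ω ⊂ ℂⁿ be a bounded open set. Suppose f : ℂⁿ → ℂ is smooth, vanishes identically outside Ω, and all of its iterated real partial derivatives vanish at every point of the boundary ∂Ω (i.e. f vanishes to infinite order at ∂Ω). If ∫_Ω f·u₁·u₂ dλ = 0 for every pair of functions u₁, u₂ that are smooth and harmonic on some open neighborhood of the closure of Ω, then f ≡ 0. -/
open MeasureTheory

/-- The Euclidean Laplacian of a function on ℂⁿ ≅ ℝ^{2n}: the sum of the 2n pure second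
partial derivatives in the real coordinate directions `e_j` and `i·e_j`. -/
noncomputable def vLaplacian {n : ℕ} {E : Type*} [NormedAddCommGroup E] [NormedSpace ℝ E]
    (u : (Fin n → ℂ) → E) (x : Fin n → ℂ) : E :=
  ∑ j : Fin n,
    (iteratedFDeriv ℝ 2 u x ![Pi.single j 1, Pi.single j 1] +
     iteratedFDeriv ℝ 2 u x ![Pi.single j Complex.I, Pi.single j Complex.I])

/-- A function is harmonic on a set if it is C² there and its Laplacian vanishes there. -/
def HarmonicOn {n : ℕ} {E : Type*} [NormedAddCommGroup E] [NormedSpace ℝ E]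
    (u : (Fin n → ℂ) → E) (U : Set (Fin n → ℂ)) : Prop :=
  ContDiffOn ℝ 2 u U ∧ ∀ x ∈ U, vLaplacian u x = 0

lemma key_second {E F : Type*} [NormedAddCommGroup E] [NormedSpace ℂ E]
    [NormedAddCommGroup F] [NormedSpace ℂ F]
    {u : E → F} (hu : ContDiff ℂ (⊤ : ℕ∞) u) (x a b : E) :
    iteratedFDeriv ℝ 2 u x ![a, b] = fderiv ℂ (fderiv ℂ u) x a b := by
  have hud : Differentiable ℂ u := hu.differentiable (by simp)
  have hu2 : ContDiff ℂ (⊤ : ℕ∞) (fderiv ℂ u) := hu.fderiv_right (by exact_mod_cast le_top)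
  have hud2 : Differentiable ℂ (fderiv ℂ u) := hu2.differentiable (by simp)
  rw [iteratedFDeriv_two_apply]
  have h1 : fderiv ℝ u = fun y =>
      (ContinuousLinearMap.restrictScalarsL ℂ E F ℝ ℝ) (fderiv ℂ u y) := by
    funext y; exact (hud y).fderiv_restrictScalars ℝ
  rw [h1]
  have h2 : fderiv ℝ (fun y => (ContinuousLinearMap.restrictScalarsL ℂ E F ℝ ℝ)
      (fderiv ℂ u y)) x = (ContinuousLinearMap.restrictScalarsL ℂ E F ℝ ℝ).comp
      ((fderiv ℂ (fderiv ℂ u) x).restrictScalars ℝ) := by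
    rw [← (hud2 x).fderiv_restrictScalars ℝ]
    exact ((ContinuousLinearMap.restrictScalarsL ℂ E F ℝ ℝ).hasFDerivAt.comp x
      ((hud2 x).restrictScalars ℝ).hasFDerivAt).fderiv
  rw [h2]
  rfl

lemma vLaplacian_holo {n : ℕ} {u : (Fin n → ℂ) → ℂ} (hu : ContDiff ℂ (⊤ : ℕ∞) u)
    (x : Fin n → ℂ) : vLaplacian u x = 0 := by
  unfold vLaplacian
  apply Finset.sum_eq_zero
  intro j _
  rw [key_second hu, key_second hu]
  have hs : (Pi.single j Complex.I : Fin n → ℂ) = Complex.I • (Pi.single j 1 : Fin n → ℂ) := by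
    funext k
    by_cases h : k = j <;> simp [Pi.single_apply, h]
  rw [hs]
  have h2 : ((fderiv ℂ (fderiv ℂ u) x) (Complex.I • (Pi.single j 1 : Fin n → ℂ)))
        (Complex.I • (Pi.single j 1 : Fin n → ℂ))
      = (Complex.I * Complex.I) •
        ((fderiv ℂ (fderiv ℂ u) x) (Pi.single j 1)) (Pi.single j 1) := by
    rw [_root_.map_smul, _root_.map_smul, ContinuousLinearMap.smul_apply, smul_smul]
  rw [h2, Complex.I_mul_I]
  simp

lemma vLaplacian_conj {n : ℕ} {u : (Fin n → ℂ) → ℂ} (hu : ContDiff ℝ (⊤ : ℕ∞) u)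
    (x : Fin n → ℂ) :
    vLaplacian (fun z => (starRingEnd ℂ) (u z)) x = (starRingEnd ℂ) (vLaplacian u x) := by
  set g : ℂ →L[ℝ] ℂ := (RCLike.conjCLE (K := ℂ) : ℂ ≃L[ℝ] ℂ).toContinuousLinearMap with hg
  have hgc : ∀ w : ℂ, g w = (starRingEnd ℂ) w := fun w => rfl
  have hcomp : (fun z => (starRingEnd ℂ) (u z)) = ⇑g ∘ u := rfl
  rw [hcomp]
  unfold vLaplacian
  rw [map_sum]
  apply Finset.sum_congr rfl
  intro j _
  rw [g.iteratedFDeriv_comp_left hu.contDiffAt (WithTop.coe_le_coe.mpr le_top)]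
  simp only [ContinuousLinearMap.compContinuousMultilinearMap_coe, Function.comp_apply, map_add]
  rw [hgc, hgc]

/-- Linearized Calderón problem for bounded domains in ℂⁿ: if a smooth function `f`
vanishing outside a bounded open set `Ω` and vanishing to infinite order on `∂Ω`
integrates to zero against all products `u₁·u₂` of functions smooth and harmonic on a
neighborhood of `closure Ω`, then `f ≡ 0`. -/
theorem linearized_calderon_domain {n : ℕ} (hn : 1 ≤ n)
    (Ω : Set (Fin n → ℂ)) (hΩo : IsOpen Ω) (hΩb : Bornology.IsBounded Ω)
    (f : (Fin n → ℂ) → ℂ) (hf : ContDiff ℝ (⊤ : ℕ∞) f)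
    (hf0 : ∀ z ∉ Ω, f z = 0)
    (hflat : ∀ (k : ℕ), ∀ z ∈ frontier Ω, iteratedFDeriv ℝ k f z = 0)
    (hint : ∀ (V : Set (Fin n → ℂ)) (u₁ u₂ : (Fin n → ℂ) → ℂ),
      IsOpen V → closure Ω ⊆ V →
      ContDiffOn ℝ (⊤ : ℕ∞) u₁ V → HarmonicOn u₁ V →
      ContDiffOn ℝ (⊤ : ℕ∞) u₂ V → HarmonicOn u₂ V →
      ∫ z in Ω, f z * u₁ z * u₂ z = 0) :
    ∀ z, f z = 0 := by
    classical
  have hK : IsCompact (closure Ω) := hΩb.isCompact_closure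
  set conjC := starRingEnd ℂ with hconjC
  -- monomials are entire
  have hmonoCD : ∀ a : Fin n → ℕ,
      ContDiff ℂ (⊤ : ℕ∞) (fun z : Fin n → ℂ => ∏ j, z j ^ a j) := fun a =>
    contDiff_prod fun i _ =>
      (ContinuousLinearMap.proj (R := ℂ) (φ := fun _ : Fin n => ℂ) i).contDiff.pow _
  -- entire functions are harmonic
  have hharm : ∀ u : (Fin n → ℂ) → ℂ, ContDiff ℂ (⊤ : ℕ∞) u →
      ContDiffOn ℝ (⊤ : ℕ∞) u Set.univ ∧ HarmonicOn u Set.univ := fun u hu =>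
    ⟨(hu.restrict_scalars ℝ).contDiffOn,
     ⟨((hu.restrict_scalars ℝ).of_le (by decide)).contDiffOn,
      fun x _ => vLaplacian_holo hu x⟩⟩
  have hharmc : ∀ u : (Fin n → ℂ) → ℂ, ContDiff ℂ (⊤ : ℕ∞) u →
      ContDiffOn ℝ (⊤ : ℕ∞) (fun z => conjC (u z)) Set.univ ∧
        HarmonicOn (fun z => conjC (u z)) Set.univ := by
    intro u hu
    have hru : ContDiff ℝ (⊤ : ℕ∞) u := hu.restrict_scalars ℝ
    have hc : ContDiff ℝ (⊤ : ℕ∞) (fun z => conjC (u z)) :=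
      ((RCLike.conjCLE (K := ℂ)).toContinuousLinearMap.contDiff).comp hru
    exact ⟨hc.contDiffOn, ⟨(hc.of_le (by decide)).contDiffOn, fun x _ => by
      rw [hconjC, vLaplacian_conj hru, vLaplacian_holo hu, map_zero]⟩⟩
  -- moments vanish
  have hmom : ∀ a b : Fin n → ℕ,
      ∫ z in Ω, f z * ((∏ j, z j ^ a j) * ∏ j, conjC (z j) ^ b j) = 0 := by
    intro a b
    have h1 := hharm _ (hmonoCD a)
    have h2 := hharmc _ (hmonoCD b)
    have hequiv : (fun z : Fin n → ℂ => conjC ((fun z : Fin n → ℂ => ∏ j, z j ^ b j) z))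
        = fun z : Fin n → ℂ => ∏ j, conjC (z j) ^ b j := by
      funext z; rw [map_prod]; simp
    rw [hequiv] at h2
    have key := hint Set.univ _ _ isOpen_univ (Set.subset_univ _) h1.1 h1.2 h2.1 h2.2
    simpa [mul_assoc] using key
  -- integrability of continuous integrands
  have hcont_int : ∀ q : (Fin n → ℂ) → ℂ, Continuous q →
      IntegrableOn (fun z => f z * q z) Ω := fun q hq =>
    ((hf.continuous.mul hq).continuousOn.integrableOn_compact hK).mono_set subset_closure
  -- generators
  set G : Set ((Fin n → ℂ) → ℂ) :=
    (Set.range fun j : Fin n => fun z : Fin n → ℂ => z j) ∪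
    (Set.range fun j : Fin n => fun z : Fin n → ℂ => conjC (z j)) with hG
  -- monomial description of the multiplicative closure
  have hclosG : ∀ q ∈ Submonoid.closure G, ∃ a b : Fin n → ℕ,
      q = fun z : Fin n → ℂ => (∏ j, z j ^ a j) * ∏ j, conjC (z j) ^ b j := by
    intro q hq
    induction hq using Submonoid.closure_induction with
    | mem x hx =>
      rcases hx with ⟨j, rfl⟩ | ⟨j, rfl⟩
      · refine ⟨Pi.single j 1, 0, ?_⟩
        funext z
        rw [Finset.prod_eq_single j (fun b _ hb => by simp [Pi.single_apply, hb]) (by simp)]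
        simp
      · refine ⟨0, Pi.single j 1, ?_⟩
        funext z
        rw [Finset.prod_eq_single (f := fun j' => conjC (z j') ^ (Pi.single j 1 : Fin n → ℕ) j')
          j (fun b _ hb => by simp [Pi.single_apply, hb]) (by simp)]
        simp
    | one => exact ⟨0, 0, by funext z; simp⟩
    | mul x y hx hy ihx ihy =>
      obtain ⟨a₁, b₁, rfl⟩ := ihx
      obtain ⟨a₂, b₂, rfl⟩ := ihy
      refine ⟨a₁ + a₂, b₁ + b₂, ?_⟩
      funext z
      simp only [Pi.mul_apply, Pi.add_apply, pow_add, Finset.prod_mul_distrib]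
      ring
  -- integrals against the adjoined algebra vanish
  have hspan : ∀ q ∈ Algebra.adjoin ℂ G,
      IntegrableOn (fun z => f z * q z) Ω ∧ ∫ z in Ω, f z * q z = 0 := by
    intro q hq
    have hq' : q ∈ Submodule.span ℂ ((Submonoid.closure G : Submonoid _) : Set _) := by
      rw [← Algebra.adjoin_eq_span]; exact hq
    clear hq
    induction hq' using Submodule.span_induction with
    | mem x hx =>
      obtain ⟨a, b, rfl⟩ := hclosG x hx
      have hqc : Continuous fun z : Fin n → ℂ => (∏ j, z j ^ a j) * ∏ j, conjC (z j) ^ b j := by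
        apply Continuous.mul
        · exact continuous_finset_prod _ fun j _ => (continuous_apply j).pow _
        · exact continuous_finset_prod _ fun j _ =>
            (continuous_star.comp (continuous_apply j)).pow _
      exact ⟨hcont_int _ hqc, hmom a b⟩
    | zero =>
      constructor
      · simpa using (integrable_zero _ _ (volume.restrict Ω))
      · simp
    | add x y hx hy ihx ihy =>
      constructor
      · simpa [Pi.add_apply, mul_add] using (show IntegrableOn (fun z => f z * x z + f z * y z) Ω from ihx.1.add ihy.1)
      · simp only [Pi.add_apply, mul_add]
        rw [integral_add ihx.1 ihy.1, ihx.2, ihy.2, add_zero]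
    | smul c x hx ih =>
      constructor
      · simpa [Pi.smul_apply, smul_eq_mul, mul_left_comm] using (show IntegrableOn (fun z => c * (f z * x z)) Ω volume from ih.1.const_mul c)
      · simp only [Pi.smul_apply, smul_eq_mul, mul_left_comm]
        rw [integral_const_mul, ih.2, mul_zero]
  -- Stone–Weierstrass on the compact set K = closure Ω
  haveI : CompactSpace (closure Ω) := isCompact_iff_compactSpace.mp hK
  set cc : Fin n → C(closure Ω, ℂ) := fun j =>
    ⟨fun x => (x : Fin n → ℂ) j, (continuous_apply j).comp continuous_subtype_val⟩ with hcc
  set A := StarAlgebra.adjoin ℂ (Set.range cc) with hA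
  have hsep : A.SeparatesPoints := by
    intro x y hxy
    have hne : (x : Fin n → ℂ) ≠ (y : Fin n → ℂ) := fun h => hxy (Subtype.ext h)
    obtain ⟨j, hj⟩ := Function.ne_iff.mp hne
    exact ⟨_, ⟨cc j, StarAlgebra.subset_adjoin ℂ _ (Set.mem_range_self j), rfl⟩, hj⟩
  have hdense := ContinuousMap.starSubalgebra_topologicalClosure_eq_top_of_separatesPoints A hsep
  -- conjugation stability of the adjoined algebra
  have hconjmem : ∀ q ∈ Algebra.adjoin ℂ G,
      (fun z => conjC (q z)) ∈ Algebra.adjoin ℂ G := by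
    intro q hq
    induction hq using Algebra.adjoin_induction with
    | mem x hx =>
      rcases hx with ⟨j, rfl⟩ | ⟨j, rfl⟩
      · exact Algebra.subset_adjoin (Or.inr ⟨j, rfl⟩)
      · have he : (fun z : Fin n → ℂ => conjC (conjC (z j))) = fun z : Fin n → ℂ => z j := by
          funext z; simp
        rw [he]; exact Algebra.subset_adjoin (Or.inl ⟨j, rfl⟩)
    | algebraMap r =>
      have he : (fun z : Fin n → ℂ => conjC ((algebraMap ℂ ((Fin n → ℂ) → ℂ) r) z))
          = algebraMap ℂ ((Fin n → ℂ) → ℂ) (conjC r) := rfl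
      rw [he]; exact algebraMap_mem _ _
    | add x y hx hy ihx ihy =>
      have he : (fun z => conjC ((x + y) z))
          = (fun z => conjC (x z)) + fun z => conjC (y z) := by
        funext z; simp [Pi.add_apply]
      rw [he]; exact add_mem ihx ihy
    | mul x y hx hy ihx ihy =>
      have he : (fun z => conjC ((x * y) z))
          = (fun z => conjC (x z)) * fun z => conjC (y z) := by
        funext z; simp [Pi.mul_apply]
      rw [he]; exact mul_mem ihx ihy
  -- every element of A is represented by an element of the function algebra
  have hrep : ∀ g ∈ A, ∃ q ∈ Algebra.adjoin ℂ G, ∀ x : closure Ω, g x = q (x : Fin n → ℂ) := by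
    intro g hg
    induction hg using StarAlgebra.adjoin_induction with
    | mem x hx =>
      obtain ⟨j, rfl⟩ := hx
      exact ⟨_, Algebra.subset_adjoin (Or.inl ⟨j, rfl⟩), fun x => rfl⟩
    | algebraMap r =>
      exact ⟨algebraMap ℂ ((Fin n → ℂ) → ℂ) r, algebraMap_mem _ r, fun x => rfl⟩
    | add x y hx hy ihx ihy =>
      obtain ⟨q₁, hq₁, he₁⟩ := ihx
      obtain ⟨q₂, hq₂, he₂⟩ := ihy
      exact ⟨q₁ + q₂, add_mem hq₁ hq₂, fun x => by simp [he₁ x, he₂ x]⟩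
    | mul x y hx hy ihx ihy =>
      obtain ⟨q₁, hq₁, he₁⟩ := ihx
      obtain ⟨q₂, hq₂, he₂⟩ := ihy
      exact ⟨q₁ * q₂, mul_mem hq₁ hq₂, fun x => by simp [he₁ x, he₂ x]⟩
    | star x hx ihx =>
      obtain ⟨q, hq, he⟩ := ihx
      exact ⟨fun z => conjC (q z), hconjmem q hq, fun x => by
        simp [he x, hconjC]⟩
  -- approximation of conj ∘ f on K
  have happrox : ∀ ε : ℝ, 0 < ε → ∃ q ∈ Algebra.adjoin ℂ G,
      ∀ z ∈ closure Ω, ‖conjC (f z) - q z‖ ≤ ε := by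
    intro ε hε
    set F : C(closure Ω, ℂ) :=
      ⟨fun x => conjC (f (x : Fin n → ℂ)),
       continuous_star.comp (hf.continuous.comp continuous_subtype_val)⟩ with hF
    have hFcl : F ∈ closure (A : Set C(closure Ω, ℂ)) := by
      have : F ∈ A.topologicalClosure := by rw [hdense]; trivial
      exact this
    obtain ⟨g, hgA, hgd⟩ := Metric.mem_closure_iff.mp hFcl ε hε
    obtain ⟨q, hqmem, hqe⟩ := hrep g hgA
    refine ⟨q, hqmem, fun z hz => ?_⟩
    have h1 := ContinuousMap.dist_apply_le_dist (f := F) (g := g) (⟨z, hz⟩ : closure Ω)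
    rw [dist_eq_norm] at h1
    have h2 : F ⟨z, hz⟩ = conjC (f z) := rfl
    rw [h2, hqe ⟨z, hz⟩] at h1
    exact h1.trans hgd.le
  -- the L² norm of f over Ω vanishes
  have hfint : IntegrableOn (fun z => f z * conjC (f z)) Ω :=
    hcont_int _ (continuous_star.comp hf.continuous)
  have hnormint : IntegrableOn (fun z => ‖f z‖) Ω :=
    (hf.continuous.norm.continuousOn.integrableOn_compact hK).mono_set subset_closure
  set C₀ := ∫ z in Ω, ‖f z‖ with hC
  have hmain : ∀ ε : ℝ, 0 < ε → ‖∫ z in Ω, f z * conjC (f z)‖ ≤ ε * C₀ := by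
    intro ε hε
    obtain ⟨q, hqmem, hqb⟩ := happrox ε hε
    obtain ⟨hqi, hq0⟩ := hspan q hqmem
    have hdiff : IntegrableOn (fun z => f z * (conjC (f z) - q z)) Ω := by
      simpa [mul_sub] using (show IntegrableOn (fun z => f z * conjC (f z) - f z * q z) Ω from hfint.sub hqi)
    have hsplit : ∫ z in Ω, f z * conjC (f z) = ∫ z in Ω, f z * (conjC (f z) - q z) := by
      simp only [mul_sub]
      rw [integral_sub hfint hqi, hq0, sub_zero]
    rw [hsplit]
    have hb : ∀ᵐ z ∂(volume.restrict Ω), ‖f z * (conjC (f z) - q z)‖ ≤ ε * ‖f z‖ := by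
      refine (ae_restrict_iff' hΩo.measurableSet).mpr (Filter.Eventually.of_forall fun z hz => ?_)
      rw [norm_mul]
      calc ‖f z‖ * ‖conjC (f z) - q z‖ ≤ ‖f z‖ * ε :=
            mul_le_mul_of_nonneg_left (hqb z (subset_closure hz)) (norm_nonneg _)
        _ = ε * ‖f z‖ := mul_comm _ _
    calc ‖∫ z in Ω, f z * (conjC (f z) - q z)‖
        ≤ ∫ z in Ω, ‖f z * (conjC (f z) - q z)‖ := norm_integral_le_integral_norm _
      _ ≤ ∫ z in Ω, ε * ‖f z‖ := integral_mono_ae hdiff.norm (hnormint.const_mul ε) hb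
      _ = ε * C₀ := by rw [integral_const_mul]
  have hC0 : 0 ≤ C₀ := integral_nonneg fun z => norm_nonneg _
  clear_value C₀
  set J := ∫ z in Ω, Complex.normSq (f z) with hJ
  have hJeq : ∫ z in Ω, f z * conjC (f z) = (J : ℂ) := by
    rw [hJ]
    rw [show ∫ z in Ω, f z * conjC (f z) = ∫ z in Ω, ((Complex.normSq (f z) : ℝ) : ℂ) from
      integral_congr_ae (Filter.Eventually.of_forall fun z => (Complex.mul_conj (f z)))]
    exact integral_ofReal
  have hJnn : 0 ≤ J := integral_nonneg fun z => Complex.normSq_nonneg _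
  have hJ0 : J = 0 := by
    by_contra hne
    have hJpos : 0 < J := lt_of_le_of_ne hJnn (Ne.symm hne)
    have h2d : (0:ℝ) < 2 * (C₀ + 1) := by linarith
    have h2 := hmain (J / (2 * (C₀ + 1))) (div_pos hJpos h2d)
    rw [hJeq, Complex.norm_real, Real.norm_eq_abs, _root_.abs_of_nonneg hJnn] at h2
    have hlt : J / (2 * (C₀ + 1)) * C₀ < J := by
      rw [div_mul_eq_mul_div, div_lt_iff₀ h2d]
      nlinarith [mul_nonneg hJnn hC0]
    linarith
  have hsq_int : IntegrableOn (fun z => Complex.normSq (f z)) Ω :=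
    ((Complex.continuous_normSq.comp hf.continuous).continuousOn.integrableOn_compact
      hK).mono_set subset_closure
  have hae : (fun z => Complex.normSq (f z)) =ᵐ[volume.restrict Ω] 0 :=
    (integral_eq_zero_iff_of_nonneg_ae
      (Filter.Eventually.of_forall fun z => Complex.normSq_nonneg _) hsq_int).mp hJ0
  intro z
  by_cases hz : z ∈ Ω
  · by_contra hfz
    have hUopen : IsOpen (Ω ∩ {w | f w ≠ 0}) :=
      hΩo.inter (isOpen_compl_singleton.preimage hf.continuous)
    have hpos : 0 < volume (Ω ∩ {w | f w ≠ 0}) :=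
      hUopen.measure_pos volume ⟨z, hz, hfz⟩
    have hmeas : MeasurableSet {w | Complex.normSq (f w) ≠ 0} :=
      (Complex.continuous_normSq.comp hf.continuous).measurable
        (measurableSet_singleton 0).compl
    have hzero : volume ({w | Complex.normSq (f w) ≠ 0} ∩ Ω) = 0 := by
      have h4 := hae
      rw [Filter.EventuallyEq, ae_iff] at h4
      rw [← Measure.restrict_apply hmeas]
      simpa using h4
    have hsub : Ω ∩ {w | f w ≠ 0} ⊆ {w | Complex.normSq (f w) ≠ 0} ∩ Ω :=
      fun w ⟨hw1, hw2⟩ => ⟨fun h => hw2 (Complex.normSq_eq_zero.mp h), hw1⟩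
    exact absurd (measure_mono_null hsub hzero) hpos.ne'
  · exact hf0 z hz
end

section
/- Let n ≥ 1 and let f : ℂⁿ → ℂ be a smooth function with compact support. If ∫_{ℂⁿ} f(z)·F(z)·conj(G(z)) dλ(z) = 0 for every pair of entire holomorphic functions F, G : ℂⁿ → ℂ, then f ≡ 0. In other words, products of holomorphic and antiholomorphic functions form a complete set in the sense of the paper. -/
open MeasureTheory Complex Real FourierTransform
open scoped RealInnerProductSpace

noncomputable section ProdHolAux
variable {m : ℕ}

local instance : InnerProductSpace ℝ (EuclideanSpace ℂ (Fin m)) :=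
  InnerProductSpace.complexToReal
local instance : MeasurableSpace (EuclideanSpace ℂ (Fin m)) := inferInstance
local instance : BorelSpace (EuclideanSpace ℂ (Fin m)) := inferInstance

/-- Completeness of products of holomorphic and antiholomorphic functions on ℂⁿ:
if a smooth compactly supported `f : ℂⁿ → ℂ` satisfies `∫ f · F · conj G = 0` for all
entire holomorphic functions `F, G`, then `f ≡ 0`. -/
theorem products_holomorphic_antiholomorphic_complete {n : ℕ} (hn : 1 ≤ n)
    (f : (Fin n → ℂ) → ℂ) (hf : ContDiff ℝ (⊤ : ℕ∞) f) (hsupp : HasCompactSupport f)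
    (hint : ∀ F G : (Fin n → ℂ) → ℂ, Differentiable ℂ F → Differentiable ℂ G →
      ∫ z, f z * F z * (starRingEnd ℂ) (G z) = 0) :
    f = 0 := by
  classical
  set V := EuclideanSpace ℂ (Fin n) with hV
  let e : (Fin n → ℂ) ≃ᵐ V :=
    { toEquiv := (WithLp.equiv 2 (Fin n → ℂ)).symm
      measurable_toFun := WithLp.measurable_toLp _ _
      measurable_invFun := WithLp.measurable_ofLp _ _ }
  let h : V ≃ₜ (Fin n → ℂ) := (PiLp.continuousLinearEquiv 2 ℂ (fun _ : Fin n => ℂ)).toHomeomorph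
  let g : V → ℂ := fun v => f (h v)
  have hg_cont : Continuous g := (hf.continuous).comp h.continuous
  have hg_supp : HasCompactSupport g := hsupp.comp_homeomorph h
  have hHaar : Measure.IsAddHaarMeasure ((volume : Measure (Fin n → ℂ)).map e) :=
    (PiLp.continuousLinearEquiv 2 ℂ (fun _ : Fin n => ℂ)).symm.isAddHaarMeasure_map
      (volume : Measure (Fin n → ℂ))
  set ν : Measure V := (volume : Measure (Fin n → ℂ)).map e with hν
  obtain ⟨c, hc⟩ : ∃ c : NNReal, (volume : Measure V) = c • ν :=
    ⟨_, Measure.isAddLeftInvariant_eq_smul (volume : Measure V) ν⟩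
  have hg_int : Integrable g := hg_cont.integrable_of_hasCompactSupport hg_supp
  have hFT : 𝓕 g = 0 := by
    funext w
    simp only [Pi.zero_apply]
    rw [Real.fourier_eq', hc, integral_smul_nnreal_measure]
    have key : (∫ v : V, Complex.exp ((↑(-2 * π * ⟪v, w⟫) * Complex.I)) • g v ∂ν) = 0 := by
      rw [hν, MeasureTheory.integral_map_equiv]
      set F : (Fin n → ℂ) → ℂ := fun z =>
        Complex.exp (-(π : ℂ) * Complex.I * ∑ j, z j * (starRingEnd ℂ) (w j)) with hF
      set G : (Fin n → ℂ) → ℂ := fun z =>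
        Complex.exp ((π : ℂ) * Complex.I * ∑ j, z j * (starRingEnd ℂ) (w j)) with hG
      have hdiff : Differentiable ℂ (fun z : Fin n → ℂ => ∑ j, z j * (starRingEnd ℂ) (w j)) :=
        Differentiable.fun_sum fun j _ =>
          ((ContinuousLinearMap.proj (R := ℂ) (φ := fun _ : Fin n => ℂ) j).differentiable).mul_const _
      have hFd : Differentiable ℂ F := (hdiff.const_mul _).cexp
      have hGd : Differentiable ℂ G := (hdiff.const_mul _).cexp
      rw [← hint F G hFd hGd]
      congr 1
      funext z
      have hgz : g (e z) = f z := rfl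
      have hinner : ⟪(e z : V), w⟫ = (∑ j, (starRingEnd ℂ) (z j) * w j).re := by
        rw [real_inner_eq_re_inner ℂ, PiLp.inner_apply]
        simp [RCLike.inner_apply]
        show ∑ x, ((w.ofLp x).re * (z x).re + (w.ofLp x).im * (z x).im) = _
        exact Finset.sum_congr rfl fun x _ => by ring
      rw [hgz, hinner, smul_eq_mul]
      simp only [hF, hG]
      set s : ℂ := ∑ j, (starRingEnd ℂ) (z j) * w j with hs
      have hS' : (∑ j, z j * (starRingEnd ℂ) (w j)) = (starRingEnd ℂ) s := by
        rw [hs, map_sum]; simp [mul_comm]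
      rw [hS', ← Complex.exp_conj]
      have h1 : (starRingEnd ℂ) ((π : ℂ) * Complex.I * (starRingEnd ℂ) s)
          = -(π : ℂ) * Complex.I * s := by
        simp only [map_mul, Complex.conj_ofReal, Complex.conj_I, RingHomCompTriple.comp_apply,
          RingHom.id_apply, starRingEnd_self_apply]
        ring
      rw [h1, mul_assoc (f z), ← Complex.exp_add]
      have h2 : -(π : ℂ) * Complex.I * (starRingEnd ℂ) s + -(π : ℂ) * Complex.I * s
          = ↑(-2 * π * s.re) * Complex.I := by
        have hcs := Complex.add_conj s
        push_cast at hcs ⊢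
        linear_combination (-(π : ℂ) * Complex.I) * hcs
      rw [h2]
      push_cast
      ring
    rw [key, smul_zero]
  have hg0 : g = 0 := by
    have h1 : Integrable (𝓕 g) := by rw [hFT]; exact integrable_zero _ _ _
    have h2 := hg_cont.fourierInv_fourier_eq hg_int h1
    rw [hFT] at h2
    rw [← h2]
    funext v
    simp [Real.fourierInv_eq]
  funext z
  have : g ((WithLp.equiv 2 (Fin n → ℂ)).symm z) = 0 := by rw [hg0]; rfl
  exact this

end ProdHolAux
end

section
/- Let U ⊆ ℂⁿ be open, p ∈ U, and let F : U → ℂⁿ be holomorphic with F(p) = 0 and with complex Fréchet derivative DF(p) : ℂⁿ → ℂⁿ a ℂ-linear isomorphism. Define Φ : U → ℂ by Φ(z) = Σ_{j=1}^n F_j(z)², where F_j are the components of F. Then Φ is holomorphic, the derivative of Φ at p vanishes, and p is a nondegenerate critical point of both Re Φ and Im Φ, i.e. the real Hessian bilinear forms of Re Φ and of Im Φ at p are nondegenerate. -/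
open Complex

open Asymptotics Metric

private lemma hasFDerivAt_smul_of_zero {E F : Type*} [NormedAddCommGroup E] [NormedSpace ℂ E]
    [NormedAddCommGroup F] [NormedSpace ℂ F]
    {c : E → ℂ} {c' : E →L[ℂ] ℂ} {M : E → F} {p : E}
    (hc : HasFDerivAt c c' p) (h0 : c p = 0) (hM : ContinuousAt M p) :
    HasFDerivAt (fun z => c z • M z) (c'.smulRight (M p)) p := by
  have h1 : HasFDerivAt (fun z => c z • M p) (c'.smulRight (M p)) p := hc.smul_const (M p)
  have hco : (fun z => c z) =O[nhds p] fun z => z - p := by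
    simpa [h0] using hc.isBigO_sub
  have hMo : (fun z => M z - M p) =o[nhds p] (fun _ => (1 : ℂ)) := by
    rw [Asymptotics.isLittleO_one_iff]
    exact tendsto_sub_nhds_zero_iff.2 hM.tendsto
  have o1 : (fun z => c z • (M z - M p)) =o[nhds p] (fun z => z - p) := by
    have := (Asymptotics.isBigO_refl c (nhds p)).smul_isLittleO hMo
    refine (this.trans_isBigO ?_)
    simpa [smul_eq_mul] using hco
  have h2 : HasFDerivAt (fun z => c z • (M z - M p)) (0 : E →L[ℂ] F) p := by
    rw [hasFDerivAt_iff_isLittleO]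
    simpa [h0] using o1
  have heq : (fun z => c z • M z) = fun z => c z • M p + c z • (M z - M p) := by
    funext z; rw [smul_sub]; abel
  rw [heq]
  simpa using h1.fun_add h2

private lemma continuousAt_fderiv_of_differentiableOn
    {E F : Type*} [NormedAddCommGroup E] [NormedSpace ℂ E] [ProperSpace E]
    [NormedAddCommGroup F] [NormedSpace ℂ F]
    {U : Set E} (hU : IsOpen U) {f : E → F} (hf : DifferentiableOn ℂ f U)
    {p : E} (hp : p ∈ U) : ContinuousAt (fderiv ℂ f) p := by
  obtain ⟨R, hR0, hRU⟩ := Metric.isOpen_iff.1 hU p hp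
  set r := R / 4 with hrdef
  have hr0 : 0 < r := by positivity
  have hKU : Metric.closedBall p (3 * r) ⊆ U := by
    intro x hx
    apply hRU
    rw [Metric.mem_ball]
    rw [Metric.mem_closedBall] at hx
    nlinarith
  have hfc : ContinuousOn f (Metric.closedBall p (3 * r)) := hf.continuousOn.mono hKU
  have hUC := (isCompact_closedBall p (3 * r)).uniformContinuousOn_of_continuous hfc
  rw [Metric.continuousAt_iff]
  intro ε hε
  rw [Metric.uniformContinuousOn_iff] at hUC
  obtain ⟨δ, hδ0, hδ⟩ := hUC (ε * r / 8) (by positivity)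
  refine ⟨min δ r, lt_min hδ0 hr0, ?_⟩
  intro z hz
  have hzδ : dist z p < δ := lt_of_lt_of_le hz (min_le_left _ _)
  have hzr : dist z p < r := lt_of_lt_of_le hz (min_le_right _ _)
  have hzU : z ∈ U := hKU (by rw [Metric.mem_closedBall]; nlinarith [hzr])
  have hmem1 : ∀ w : E, ‖w‖ ≤ r → p + w ∈ Metric.closedBall p (3 * r) := by
    intro w hw
    rw [Metric.mem_closedBall, dist_self_add_left]
    linarith
  have hmem2 : ∀ w : E, ‖w‖ ≤ r → z + w ∈ Metric.closedBall p (3 * r) := by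
    intro w hw
    rw [Metric.mem_closedBall]
    calc dist (z + w) p ≤ dist (z + w) z + dist z p := dist_triangle _ _ _
      _ ≤ r + r := by
          rw [dist_self_add_left]
          exact add_le_add hw hzr.le
      _ ≤ 3 * r := by linarith
  -- the key pointwise bound
  have key : ∀ v : E, ‖(fderiv ℂ f z - fderiv ℂ f p) v‖ ≤ 3 * (ε * r / 8) / r * ‖v‖ := by
    intro v
    rcases eq_or_ne v 0 with rfl | hv
    · simp
    have hv0 : (0 : ℝ) < ‖v‖ := norm_pos_iff.2 hv
    set ρ := r / ‖v‖ with hρdef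
    have hρ0 : 0 < ρ := by positivity
    set u : ℂ → F := fun t => f (z + t • v) - f (p + t • v) with hu
    have hsm : ∀ t : ℂ, t ∈ Metric.ball (0 : ℂ) ρ → ‖t • v‖ ≤ r := by
      intro t ht
      rw [Metric.mem_ball, dist_zero_right] at ht
      rw [norm_smul]
      calc ‖t‖ * ‖v‖ ≤ ρ * ‖v‖ := by nlinarith
        _ = r := by rw [hρdef, div_mul_cancel₀ _ hv0.ne']
    have hud : DifferentiableOn ℂ u (Metric.ball 0 ρ) := by
      intro t ht
      have h1 : DifferentiableAt ℂ (fun t : ℂ => z + t • v) t :=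
        ((differentiableAt_id).smul_const v).const_add z
      have h2 : DifferentiableAt ℂ (fun t : ℂ => p + t • v) t :=
        ((differentiableAt_id).smul_const v).const_add p
      have d1 : DifferentiableAt ℂ f (z + t • v) :=
        hf.differentiableAt (hU.mem_nhds (hKU (hmem2 _ (hsm t ht))))
      have d2 : DifferentiableAt ℂ f (p + t • v) :=
        hf.differentiableAt (hU.mem_nhds (hKU (hmem1 _ (hsm t ht))))
      exact ((d1.comp t h1).sub (d2.comp t h2)).differentiableWithinAt
    have hub : ∀ t : ℂ, t ∈ Metric.ball (0 : ℂ) ρ → ‖u t‖ < ε * r / 8 := by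
      intro t ht
      have h1 := hmem2 _ (hsm t ht)
      have h2 := hmem1 _ (hsm t ht)
      have := hδ _ h1 _ h2 (by simpa [dist_eq_norm] using hzδ)
      simpa [hu, dist_eq_norm] using this
    have h_maps : Set.MapsTo u (Metric.ball 0 ρ) (Metric.ball (u 0) (3 * (ε * r / 8))) := by
      intro t ht
      rw [Metric.mem_ball, dist_eq_norm]
      have h0 : (0 : ℂ) ∈ Metric.ball (0 : ℂ) ρ := Metric.mem_ball_self hρ0
      calc ‖u t - u 0‖ ≤ ‖u t‖ + ‖u 0‖ := norm_sub_le _ _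
        _ < ε * r / 8 + ε * r / 8 := add_lt_add (hub t ht) (hub 0 h0)
        _ ≤ 3 * (ε * r / 8) := by nlinarith
    have hschwarz := Complex.norm_deriv_le_div_of_mapsTo_ball hud (h_maps.mono_right Metric.ball_subset_closedBall) hρ0
    -- identify deriv u 0
    have hline : ∀ w : E, HasDerivAt (fun t : ℂ => w + t • v) v 0 := by
      intro w
      simpa using ((hasDerivAt_id (0 : ℂ)).smul_const v).const_add w
    have hz' : HasDerivAt (fun t : ℂ => f (z + t • v)) (fderiv ℂ f z v) 0 := by
      have e1 : HasFDerivAt f (fderiv ℂ f z) (z + (0 : ℂ) • v) := by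
        simpa using (hf.differentiableAt (hU.mem_nhds hzU)).hasFDerivAt
      exact e1.comp_hasDerivAt 0 (hline z)
    have hp' : HasDerivAt (fun t : ℂ => f (p + t • v)) (fderiv ℂ f p v) 0 := by
      have e1 : HasFDerivAt f (fderiv ℂ f p) (p + (0 : ℂ) • v) := by
        simpa using (hf.differentiableAt (hU.mem_nhds hp)).hasFDerivAt
      exact e1.comp_hasDerivAt 0 (hline p)
    have hu' : HasDerivAt u (fderiv ℂ f z v - fderiv ℂ f p v) 0 := hz'.sub hp'
    rw [hu'.deriv] at hschwarz
    calc ‖(fderiv ℂ f z - fderiv ℂ f p) v‖ = ‖fderiv ℂ f z v - fderiv ℂ f p v‖ := by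
          simp [ContinuousLinearMap.sub_apply]
      _ ≤ 3 * (ε * r / 8) / ρ := hschwarz
      _ = 3 * (ε * r / 8) / r * ‖v‖ := by
          rw [hρdef]
          field_simp
  have hop : ‖fderiv ℂ f z - fderiv ℂ f p‖ ≤ 3 * (ε * r / 8) / r :=
    ContinuousLinearMap.opNorm_le_bound _ (by positivity) key
  rw [dist_eq_norm]
  calc ‖fderiv ℂ f z - fderiv ℂ f p‖ ≤ 3 * (ε * r / 8) / r := hop
    _ < ε := by
        have h : 3 * (ε * r / 8) / r = 3 * ε / 8 := by field_simp
        rw [h]; linarith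

set_option maxHeartbeats 1600000 in
/-- If `F : U → ℂⁿ` is holomorphic on an open set `U ⊆ ℂⁿ`, `F p = 0`, and the complex
derivative `DF(p)` is a ℂ-linear isomorphism, then `Φ(z) = ∑ⱼ Fⱼ(z)²` is holomorphic on
`U`, its derivative vanishes at `p`, and `p` is a nondegenerate critical point of both
`Re Φ` and `Im Φ` (the real Hessian bilinear forms at `p` are nondegenerate). -/
theorem sum_of_squares_phase_nondegenerate_critical_point {n : ℕ}
    {U : Set (Fin n → ℂ)} (hU : IsOpen U) {p : Fin n → ℂ} (hp : p ∈ U)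
    (F : (Fin n → ℂ) → (Fin n → ℂ)) (hF : DifferentiableOn ℂ F U)
    (hFp : F p = 0) (hDF : Function.Bijective (fderiv ℂ F p)) :
    DifferentiableOn ℂ (fun z => ∑ j, (F z j) ^ 2) U ∧
    fderiv ℂ (fun z => ∑ j, (F z j) ^ 2) p = 0 ∧
    (∀ X : Fin n → ℂ,
      (∀ Y : Fin n → ℂ,
        iteratedFDeriv ℝ 2 (fun z => (∑ j, (F z j) ^ 2).re) p ![X, Y] = 0) → X = 0) ∧
    (∀ X : Fin n → ℂ,
      (∀ Y : Fin n → ℂ,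
        iteratedFDeriv ℝ 2 (fun z => (∑ j, (F z j) ^ 2).im) p ![X, Y] = 0) → X = 0) := by
  have hpU : U ∈ nhds p := hU.mem_nhds hp
  have hFdiff : ∀ z ∈ U, DifferentiableAt ℂ F z := fun z hz =>
    hF.differentiableAt (hU.mem_nhds hz)
  set A : (Fin n → ℂ) →L[ℂ] (Fin n → ℂ) := fderiv ℂ F p with hA
  set Pj : Fin n → ((Fin n → ℂ) →L[ℂ] ℂ) := fun j =>
    ContinuousLinearMap.proj (R := ℂ) (φ := fun _ : Fin n => ℂ) j with hPj
  have hFj : ∀ z ∈ U, ∀ j, HasFDerivAt (fun w => F w j) ((Pj j).comp (fderiv ℂ F z)) z := by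
    intro z hz j
    exact (Pj j).hasFDerivAt.comp z (hFdiff z hz).hasFDerivAt
  have hsq : ∀ z ∈ U, HasFDerivAt (fun w => ∑ j, (F w j) ^ 2)
      (∑ j, (2 * F z j) • ((Pj j).comp (fderiv ℂ F z))) z := by
    intro z hz
    refine HasFDerivAt.fun_sum fun j _ => ?_
    have h := (hFj z hz j).smul (hFj z hz j)
    have e : (fun w => F w j ^ 2) = fun w => F w j • F w j := by
      funext w; simp [smul_eq_mul, sq]
    have e2 : (2 * F z j) • ((Pj j).comp (fderiv ℂ F z))
        = F z j • ((Pj j).comp (fderiv ℂ F z))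
          + ((Pj j).comp (fderiv ℂ F z)).smulRight (F z j) := by
      ext Y
      simp only [ContinuousLinearMap.add_apply, ContinuousLinearMap.smul_apply,
        ContinuousLinearMap.smulRight_apply, smul_eq_mul]
      ring
    rw [e, e2]
    exact h
  refine ⟨fun z hz => ((hsq z hz).differentiableAt).differentiableWithinAt, ?_, ?_⟩
  · have := (hsq p hp).fderiv
    rw [this]
    have : ∀ j : Fin n, (2 * F p j) • ((Pj j).comp (fderiv ℂ F p)) = 0 := by
      intro j
      rw [hFp]
      simp only [Pi.zero_apply, mul_zero]
      exact zero_smul ℂ ((Pj j).comp (fderiv ℂ F p))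
    rw [Finset.sum_congr rfl fun j _ => this j]
    simp
  -- second derivative
  set B : (Fin n → ℂ) →L[ℂ] ((Fin n → ℂ) →L[ℂ] ℂ) :=
    ∑ j, (((2 : ℂ) • ((Pj j).comp A)).smulRight ((Pj j).comp A)) with hB
  have hcont := continuousAt_fderiv_of_differentiableOn hU hF hp
  have hterm : ∀ j : Fin n, HasFDerivAt (fun z => (2 * F z j) • ((Pj j).comp (fderiv ℂ F z)))
      (((2 : ℂ) • ((Pj j).comp A)).smulRight ((Pj j).comp A)) p := by
    intro j
    have hc' : HasFDerivAt (fun z => 2 * F z j) ((2 : ℂ) • ((Pj j).comp A)) p := by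
      simpa using (hFj p hp j).const_mul (2 : ℂ)
    have hMc : ContinuousAt (fun z => (Pj j).comp (fderiv ℂ F z)) p :=
      ((ContinuousLinearMap.compL ℂ (Fin n → ℂ) (Fin n → ℂ) ℂ (Pj j)).continuous.continuousAt).comp
        hcont
    have h0 : (2 : ℂ) * F p j = 0 := by simp [hFp]
    exact hasFDerivAt_smul_of_zero hc' h0 hMc
  have hBd : HasFDerivAt (fderiv ℂ (fun w => ∑ j, (F w j) ^ 2)) B p := by
    have h1 : HasFDerivAt (fun z => ∑ j, (2 * F z j) • ((Pj j).comp (fderiv ℂ F z))) B p :=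
      HasFDerivAt.fun_sum fun j _ => hterm j
    refine h1.congr_of_eventuallyEq ?_
    exact Filter.eventuallyEq_of_mem hpU fun z hz => (hsq z hz).fderiv
  -- generic Hessian computation
  have main : ∀ L : ℂ →L[ℝ] ℝ, ∀ X Y : Fin n → ℂ,
      iteratedFDeriv ℝ 2 (fun z => L (∑ j, (F z j) ^ 2)) p ![X, Y] = L (B X Y) := by
    intro L X Y
    rw [iteratedFDeriv_two_apply]
    set T : ((Fin n → ℂ) →L[ℂ] ℂ) →L[ℝ] ((Fin n → ℂ) →L[ℝ] ℝ) :=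
      (ContinuousLinearMap.compL ℝ (Fin n → ℂ) ℂ ℝ L).comp
        (ContinuousLinearMap.restrictScalarsL ℂ (Fin n → ℂ) ℂ ℝ ℝ) with hT
    have hre : ∀ z ∈ U, fderiv ℝ (fun z => L (∑ j, (F z j) ^ 2)) z
        = T (fderiv ℂ (fun w => ∑ j, (F w j) ^ 2) z) := by
      intro z hz
      have h1 : HasFDerivAt (fun z => L (∑ j, (F z j) ^ 2))
          (L.comp ((fderiv ℂ (fun w => ∑ j, (F w j) ^ 2) z).restrictScalars ℝ)) z :=
        L.hasFDerivAt.comp z (((hsq z hz).differentiableAt).hasFDerivAt.restrictScalars ℝ)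
      rw [h1.fderiv]
      rfl
    have h2 : HasFDerivAt (fun z => T (fderiv ℂ (fun w => ∑ j, (F w j) ^ 2) z))
        (T.comp (B.restrictScalars ℝ)) p := T.hasFDerivAt.comp p (hBd.restrictScalars ℝ)
    have h3 : HasFDerivAt (fderiv ℝ (fun z => L (∑ j, (F z j) ^ 2)))
        (T.comp (B.restrictScalars ℝ)) p :=
      h2.congr_of_eventuallyEq (Filter.eventuallyEq_of_mem hpU hre)
    rw [h3.fderiv]
    rfl
  have hBXY : ∀ X Y : Fin n → ℂ, B X Y = ∑ j, 2 * (A X j) * (A Y j) := by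
    intro X Y
    rw [hB]
    simp [ContinuousLinearMap.sum_apply, ContinuousLinearMap.smulRight_apply, smul_eq_mul,
      hPj, mul_assoc]
  constructor
  · -- real part
    intro X hX
    obtain ⟨Y, hY⟩ := hDF.2 (fun j => (starRingEnd ℂ) (A X j))
    have h1 := hX Y
    have h2 : iteratedFDeriv ℝ 2 (fun z => (∑ j, (F z j) ^ 2).re) p ![X, Y]
        = ((∑ j, 2 * (A X j) * (A Y j)).re) := by
      rw [← hBXY]
      exact main Complex.reCLM X Y
    rw [h2] at h1
    have h3 : ∀ j, A Y j = (starRingEnd ℂ) (A X j) := fun j => congrFun hY j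
    have h4 : (∑ j, 2 * (A X j) * (A Y j)).re = ∑ j, 2 * Complex.normSq (A X j) := by
      rw [Complex.re_sum]
      refine Finset.sum_congr rfl fun j _ => ?_
      rw [h3 j, mul_assoc, Complex.mul_conj]
      simp
    rw [h4] at h1
    have h5 : ∀ j, Complex.normSq (A X j) = 0 := by
      intro j
      have h := (Finset.sum_eq_zero_iff_of_nonneg (s := Finset.univ)
          (f := fun j => 2 * Complex.normSq (A X j))
          (fun j _ => mul_nonneg (by norm_num) (Complex.normSq_nonneg _))).1 h1 j
        (Finset.mem_univ j)
      linarith [h]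
    have h6 : A X = 0 := by
      funext j
      exact Complex.normSq_eq_zero.1 (h5 j)
    have := hDF.1 (a₁ := X) (a₂ := 0) (by rw [map_zero]; exact h6)
    exact this
  · -- imaginary part
    intro X hX
    obtain ⟨Y, hY⟩ := hDF.2 (fun j => -(Complex.I * (starRingEnd ℂ) (A X j)))
    have h1 := hX Y
    have h2 : iteratedFDeriv ℝ 2 (fun z => (∑ j, (F z j) ^ 2).im) p ![X, Y]
        = ((∑ j, 2 * (A X j) * (A Y j)).im) := by
      rw [← hBXY]
      exact main Complex.imCLM X Y
    rw [h2] at h1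
    have h3 : ∀ j, A Y j = -(Complex.I * (starRingEnd ℂ) (A X j)) := fun j => congrFun hY j
    have h4 : (∑ j, 2 * (A X j) * (A Y j)).im = ∑ j, -(2 * Complex.normSq (A X j)) := by
      rw [Complex.im_sum]
      refine Finset.sum_congr rfl fun j _ => ?_
      rw [h3 j]
      have : 2 * (A X j) * -(Complex.I * (starRingEnd ℂ) (A X j))
          = -(2 * ((A X j) * (starRingEnd ℂ) (A X j)) * Complex.I) := by ring
      rw [this, Complex.mul_conj]
      simp
    rw [h4] at h1
    rw [Finset.sum_neg_distrib] at h1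
    have h1' : (∑ j, 2 * Complex.normSq (A X j)) = 0 := neg_eq_zero.1 h1
    have h5 : ∀ j, Complex.normSq (A X j) = 0 := by
      intro j
      have h := (Finset.sum_eq_zero_iff_of_nonneg (s := Finset.univ)
          (f := fun j => 2 * Complex.normSq (A X j))
          (fun j _ => mul_nonneg (by norm_num) (Complex.normSq_nonneg _))).1 h1' j
        (Finset.mem_univ j)
      linarith [h]
    have h6 : A X = 0 := by
      funext j
      exact Complex.normSq_eq_zero.1 (h5 j)
    exact hDF.1 (a₁ := X) (a₂ := 0) (by rw [map_zero]; exact h6)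
end

section
/- Let U ⊆ ℂⁿ be open and Φ : U → ℂ holomorphic. Then for Lebesgue-almost every w = (w₁,…,wₙ) ∈ ℂⁿ, the real-valued function ψ_w(z) = Im( Φ(z) − Σ_{j=1}^n w_j z_j ) is a Morse function on U, i.e. every critical point of ψ_w in U is nondegenerate. -/
set_option synthInstance.maxHeartbeats 1000000
set_option maxHeartbeats 1000000

open MeasureTheory Metric Set Complex intervalIntegral Real

section AeMorseAux

variable {n : ℕ}

/-- Cauchy estimate for the Fréchet derivative of a holomorphic function on a closed ball. -/
lemma cauchy_fderiv_bound {f : (Fin n → ℂ) → ℂ} {y : Fin n → ℂ} {ρ M : ℝ} (hρ : 0 < ρ)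
    (hd : ∀ x ∈ closedBall y ρ, DifferentiableAt ℂ f x)
    (hM : ∀ x ∈ closedBall y ρ, ‖f x‖ ≤ M) :
    ‖fderiv ℂ f y‖ ≤ M / ρ := by
  have hy : y ∈ closedBall y ρ := mem_closedBall_self hρ.le
  have hM0 : 0 ≤ M := (norm_nonneg _).trans (hM y hy)
  refine ContinuousLinearMap.opNorm_le_bound _ (by positivity) fun v => ?_
  rcases eq_or_ne v 0 with rfl | hv
  · simp
  · have hv0 : 0 < ‖v‖ := norm_pos_iff.mpr hv
    set R : ℝ := ρ / ‖v‖ with hR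
    have hRpos : 0 < R := by positivity
    set φ : ℂ → ℂ := fun ζ => f (y + ζ • v) with hφ
    have hmem : ∀ ζ : ℂ, ‖ζ‖ ≤ R → y + ζ • v ∈ closedBall y ρ := by
      intro ζ hζ
      simp only [mem_closedBall, dist_eq_norm, add_sub_cancel_left, norm_smul]
      calc ‖ζ‖ * ‖v‖ ≤ R * ‖v‖ := by gcongr
        _ = ρ := by rw [hR]; field_simp
    have hφd : DifferentiableOn ℂ φ (closedBall 0 R) := by
      intro ζ hζ
      have h1 : DifferentiableAt ℂ φ ζ := by
        have : DifferentiableAt ℂ (fun ζ : ℂ => y + ζ • v) ζ :=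
          (differentiableAt_id.smul_const v).const_add y
        exact (hd _ (hmem ζ (by simpa [dist_eq_norm] using hζ))).comp ζ this
      exact h1.differentiableWithinAt
    have hder : HasDerivAt φ (fderiv ℂ f y v) 0 := by
      have h1 : HasDerivAt (fun ζ : ℂ => y + ζ • v) v 0 := by
        simpa using ((hasDerivAt_id (0:ℂ)).smul_const v).const_add y
      have h2 : HasFDerivAt f (fderiv ℂ f y) (y + (0:ℂ) • v) := by
        simpa using (hd y hy).hasFDerivAt
      exact h2.comp_hasDerivAt 0 h1
    have hbd : ‖deriv φ 0‖ ≤ M / R := by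
      refine Complex.norm_deriv_le_of_forall_mem_sphere_norm_le hRpos
        ((hφd.mono closure_ball_subset_closedBall).diffContOnCl) fun z hz => ?_
      refine hM _ (hmem z ?_)
      simp only [mem_sphere_iff_norm, sub_zero] at hz
      exact hz.le
    have : ‖fderiv ℂ f y v‖ ≤ M / R := by rw [← hder.deriv]; exact hbd
    calc ‖fderiv ℂ f y v‖ ≤ M / R := this
      _ = M / ρ * ‖v‖ := by rw [hR]; field_simp

/-- A directional derivative of a holomorphic function of several variables is holomorphic. -/
lemma differentiableAt_fderiv_apply {U : Set (Fin n → ℂ)} (hU : IsOpen U)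
    {f : (Fin n → ℂ) → ℂ} (hf : DifferentiableOn ℂ f U) (v : Fin n → ℂ)
    {p : Fin n → ℂ} (hp : p ∈ U) :
    DifferentiableAt ℂ (fun z => fderiv ℂ f z v) p := by
  -- choose a closed ball around p inside U
  obtain ⟨δ, hδpos, hδU⟩ : ∃ δ > 0, closedBall p δ ⊆ U := by
    rcases Metric.isOpen_iff.1 hU p hp with ⟨ε, hε, hεU⟩
    exact ⟨ε / 2, by positivity, (closedBall_subset_ball (by linarith)).trans hεU⟩
  have hdiff : ∀ x ∈ closedBall p δ, DifferentiableAt ℂ f x := fun x hx =>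
    hf.differentiableAt (hU.mem_nhds (hδU hx))
  -- a bound for f on the closed ball
  obtain ⟨M, hM⟩ : ∃ M, ∀ x ∈ closedBall p δ, ‖f x‖ ≤ M := by
    rcases (isCompact_closedBall p δ).exists_bound_of_continuousOn
      ((hf.continuousOn).mono hδU) with ⟨M, hM⟩
    exact ⟨M, hM⟩
  have hM0 : 0 ≤ M := (norm_nonneg _).trans (hM p (mem_closedBall_self hδpos.le))
  set r : ℝ := δ / (2 * (1 + ‖v‖)) with hrdef
  have hrpos : 0 < r := by positivity
  have hrv : r * (1 + ‖v‖) = δ / 2 := by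
    rw [hrdef]; field_simp
  have hrδ : r ≤ δ / 2 := by
    nlinarith [norm_nonneg v]
  -- membership lemma
  have hmem : ∀ x : Fin n → ℂ, x ∈ ball p r → ∀ ζ : ℂ, ‖ζ‖ ≤ r →
      x + ζ • v ∈ closedBall p (δ / 2) := by
    intro x hx ζ hζ
    simp only [mem_closedBall, dist_eq_norm]
    have : x + ζ • v - p = (x - p) + ζ • v := by ring
    rw [this]
    calc ‖(x - p) + ζ • v‖ ≤ ‖x - p‖ + ‖ζ • v‖ := norm_add_le _ _
      _ = ‖x - p‖ + ‖ζ‖ * ‖v‖ := by rw [norm_smul]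
      _ ≤ r + r * ‖v‖ := by
          have := mem_ball_iff_norm.1 hx
          have hnv : ‖ζ‖ * ‖v‖ ≤ r * ‖v‖ := by gcongr
          linarith
      _ = δ / 2 := by rw [← hrv]; ring
  have hhalf : closedBall p (δ / 2) ⊆ U := fun x hx =>
    hδU (closedBall_subset_closedBall (by linarith) hx)
  -- derivative bound on the inner closed ball
  have hDbound : ∀ y ∈ closedBall p (δ / 2), ‖fderiv ℂ f y‖ ≤ M / (δ / 2) := by
    intro y hy
    refine cauchy_fderiv_bound (by positivity) (fun x hx => hdiff x ?_) (fun x hx => hM x ?_) <;>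
    · have h1 := mem_closedBall.1 hx
      have h2 := mem_closedBall.1 hy
      exact mem_closedBall.2 (by
        calc dist x p ≤ dist x y + dist y p := dist_triangle _ _ _
          _ ≤ δ / 2 + δ / 2 := by linarith
          _ = δ := by ring)
  -- the Cauchy-integral formula for the directional derivative
  have hformula : ∀ z ∈ ball p r, fderiv ℂ f z v =
      (2 * π * I : ℂ)⁻¹ • ∮ ζ in C(0, r), ζ ^ (-2 : ℤ) • f (z + ζ • v) := by
    intro z hz
    set φ : ℂ → ℂ := fun ζ => f (z + ζ • v) with hφdef
    have hmemz : ∀ ζ : ℂ, ‖ζ‖ ≤ r → z + ζ • v ∈ U := fun ζ hζ =>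
      hhalf (hmem z hz ζ hζ)
    have hφd : DifferentiableOn ℂ φ (closedBall 0 r) := by
      intro ζ hζ
      have h0 : DifferentiableAt ℂ (fun ζ : ℂ => z + ζ • v) ζ :=
        (differentiableAt_id.smul_const v).const_add z
      exact ((hf.differentiableAt (hU.mem_nhds (hmemz ζ (by
        simpa [dist_eq_norm] using hζ)))).comp ζ h0).differentiableWithinAt
    have hder : HasDerivAt φ (fderiv ℂ f z v) 0 := by
      have h1 : HasDerivAt (fun ζ : ℂ => z + ζ • v) v 0 := by
        simpa using ((hasDerivAt_id (0:ℂ)).smul_const v).const_add z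
      have h2 : HasFDerivAt f (fderiv ℂ f z) (z + (0:ℂ) • v) := by
        simpa using (hf.differentiableAt (hU.mem_nhds (hmemz 0 (by simp [hrpos.le])))).hasFDerivAt
      exact h2.comp_hasDerivAt 0 h1
    have := ((hφd.mono closure_ball_subset_closedBall).diffContOnCl).deriv_eq_smul_circleIntegral
      hrpos
    rw [← hder.deriv, eq_inv_smul_iff₀ (by simp [Real.pi_ne_zero, I_ne_zero]), ← this]
    refine congrArg (fun g => circleIntegral g 0 r) (funext fun ζ => ?_)
    simp [hφdef, zpow_neg]
  -- differentiation under the integral sign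
  set K : ℝ → ℂ := fun θ => circleMap 0 r θ with hKdef
  have hKne : ∀ θ, K θ ≠ 0 := fun θ => circleMap_ne_center hrpos.ne'
  have hKnorm : ∀ θ, ‖K θ‖ = r := fun θ => by
    simp [hKdef, norm_circleMap_zero, abs_of_pos hrpos]
  set F : (Fin n → ℂ) → ℝ → ℂ := fun x θ =>
    deriv (circleMap 0 r) θ • ((K θ) ^ (-2 : ℤ) • f (x + K θ • v)) with hFdef
  set F' : (Fin n → ℂ) → ℝ → (Fin n → ℂ) →L[ℂ] ℂ := fun x θ =>
    (deriv (circleMap 0 r) θ * (K θ) ^ (-2 : ℤ)) • fderiv ℂ f (x + K θ • v) with hF'def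
  have hKmem : ∀ (x : Fin n → ℂ), x ∈ ball p r → ∀ θ : ℝ, x + K θ • v ∈ closedBall p (δ/2) :=
    fun x hx θ => hmem x hx (K θ) (le_of_eq (hKnorm θ))
  have hKcont : Continuous K := continuous_circleMap 0 r
  have hKd : Continuous (fun θ => deriv (circleMap 0 r) θ) := by
    simp only [deriv_circleMap]
    exact (continuous_circleMap 0 r).mul continuous_const
  have hKpow : Continuous (fun θ => (K θ) ^ (-2 : ℤ)) := by
    refine hKcont.zpow₀ _ fun θ => Or.inl (hKne θ)
  have hcont : ∀ x ∈ ball p r, Continuous (fun θ => F x θ) := by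
    intro x hx
    refine hKd.smul (hKpow.smul ?_)
    refine (hf.continuousOn.mono hhalf).comp_continuous
      (continuous_const.add (hKcont.smul continuous_const)) (fun θ => hKmem x hx θ)
  have key : HasFDerivAt (fun x => ∫ θ in (0:ℝ)..(2*π), F x θ)
      (∫ θ in (0:ℝ)..(2*π), F' p θ) p := by
    refine intervalIntegral.hasFDerivAt_integral_of_dominated_of_fderiv_le
      (F := F) (F' := F') (bound := fun _ => r⁻¹ * (M / (δ/2))) (ball_mem_nhds p hrpos) ?_ ?_ ?_ ?_ ?_ ?_
    · filter_upwards [ball_mem_nhds p hrpos] with x hx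
      exact (hcont x hx).aestronglyMeasurable
    · exact (hcont p (mem_ball_self hrpos)).intervalIntegrable 0 (2*π)
    · -- measurability of F' p
      have h1 : Measurable (fun θ => fderiv ℂ f (p + K θ • v)) :=
        (measurable_fderiv ℂ f).comp
          (continuous_const.add (hKcont.smul continuous_const)).measurable
      have h2 : StronglyMeasurable (fun θ => fderiv ℂ f (p + K θ • v)) :=
        h1.stronglyMeasurable
      exact ((hKd.mul hKpow).stronglyMeasurable.smul h2).aestronglyMeasurable
    · -- bound
      refine Filter.Eventually.of_forall fun θ => fun _ => fun x hx => ?_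
      rw [hF'def]
      show ‖(deriv (circleMap 0 r) θ * K θ ^ (-2:ℤ)) • fderiv ℂ f (x + K θ • v)‖ ≤
        r⁻¹ * (M / (δ / 2))
      have e1 : ‖deriv (circleMap 0 r) θ‖ = r := by
        simp [deriv_circleMap, norm_mul, norm_circleMap_zero, abs_of_pos hrpos]
      have e2 : ‖(K θ) ^ (-2 : ℤ)‖ = r ^ (-2 : ℤ) := by
        rw [norm_zpow, hKnorm]
      have e3 : ‖fderiv ℂ f (x + K θ • v)‖ ≤ M / (δ/2) :=
        hDbound _ (hKmem x hx θ)
      rw [norm_smul, norm_mul, e1, e2]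
      calc r * r ^ (-2:ℤ) * ‖fderiv ℂ f (x + K θ • v)‖
          ≤ r * r ^ (-2:ℤ) * (M / (δ/2)) := by
            have : (0:ℝ) ≤ r * r ^ (-2:ℤ) := by positivity
            exact mul_le_mul_of_nonneg_left e3 this
        _ = r⁻¹ * (M / (δ/2)) := by
            have hr2 : r * r ^ (-2:ℤ) = r⁻¹ := by
              rw [zpow_neg, show ((2:ℤ)) = ((2:ℕ):ℤ) by norm_num, zpow_natCast, sq,
                mul_inv, ← mul_assoc, mul_inv_cancel₀ hrpos.ne', one_mul]
            rw [hr2]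
    · exact intervalIntegrable_const
    · -- differentiability in x
      refine Filter.Eventually.of_forall fun θ => fun _ => fun x hx => ?_
      have hx' : x + K θ • v ∈ U := hhalf (hKmem x hx θ)
      have h1 : HasFDerivAt f (fderiv ℂ f (x + K θ • v)) (x + K θ • v) :=
        (hf.differentiableAt (hU.mem_nhds hx')).hasFDerivAt
      have h2 : HasFDerivAt (fun y : Fin n → ℂ => y + K θ • v)
          (ContinuousLinearMap.id ℂ (Fin n → ℂ)) x := (hasFDerivAt_id x).add_const _
      have h3 : HasFDerivAt (fun y => f (y + K θ • v))
          (fderiv ℂ f (x + K θ • v)) x := by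
        exact h1.comp x h2
      have h4 := (h3.fun_const_smul ((K θ) ^ (-2 : ℤ))).fun_const_smul (deriv (circleMap 0 r) θ)
      rw [hF'def, hFdef]
      simpa [smul_smul] using h4
  -- conclude
  have heq : (fun z => fderiv ℂ f z v) =ᶠ[nhds p]
      (fun z => (2 * π * I : ℂ)⁻¹ • ∫ θ in (0:ℝ)..(2*π), F z θ) := by
    filter_upwards [ball_mem_nhds p hrpos] with z hz
    rw [hformula z hz]
    congr 1
  rw [Filter.EventuallyEq.differentiableAt_iff heq]
  exact (key.differentiableAt).const_smul (2 * π * I : ℂ)⁻¹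

/-- decomposition of a continuous linear functional on `Fin n → ℂ` -/
lemma clm_eq_sum_proj (A : (Fin n → ℂ) →L[ℂ] ℂ) :
    A = ∑ j, A (Pi.single j 1) • (ContinuousLinearMap.proj j :
      (Fin n → ℂ) →L[ℂ] ℂ) := by
  ext X
  have hX : X = ∑ j, X j • (Pi.single j (1:ℂ) : Fin n → ℂ) := by
    conv_lhs => rw [← Finset.univ_sum_single X]
    refine Finset.sum_congr rfl fun j _ => ?_
    rw [← Pi.single_smul, smul_eq_mul, mul_one]
  conv_lhs => rw [hX]
  rw [map_sum]
  simp only [ContinuousLinearMap.sum_apply, ContinuousLinearMap.smul_apply,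
    ContinuousLinearMap.proj_apply, _root_.map_smul]
  exact Finset.sum_congr rfl fun j _ => by simp [smul_eq_mul, mul_comm]

/-- The Fréchet derivative of a holomorphic function of several variables is holomorphic. -/
lemma differentiableAt_fderiv {U : Set (Fin n → ℂ)} (hU : IsOpen U)
    {f : (Fin n → ℂ) → ℂ} (hf : DifferentiableOn ℂ f U)
    {p : Fin n → ℂ} (hp : p ∈ U) :
    DifferentiableAt ℂ (fun z => fderiv ℂ f z) p := by
  have heq : (fun z => fderiv ℂ f z) =ᶠ[nhds p]
      (fun z => ∑ j, fderiv ℂ f z (Pi.single j 1) •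
        (ContinuousLinearMap.proj j : (Fin n → ℂ) →L[ℂ] ℂ)) := by
    filter_upwards [hU.mem_nhds hp] with z hz
    exact clm_eq_sum_proj _
  rw [Filter.EventuallyEq.differentiableAt_iff heq]
  refine DifferentiableAt.fun_sum fun j _ => ?_
  exact (differentiableAt_fderiv_apply hU hf (Pi.single j 1) hp).smul_const _

end AeMorseAux

open MeasureTheory

/-- Genericity of Morse imaginary parts among linear holomorphic perturbations: if
`Φ` is holomorphic on an open set `U ⊆ ℂⁿ`, then for Lebesgue-almost every `w ∈ ℂⁿ` the
function `ψ_w(z) = Im (Φ(z) − ∑ⱼ wⱼ zⱼ)` is Morse on `U`, i.e. every critical point of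
`ψ_w` in `U` has nondegenerate real Hessian. -/
theorem ae_linear_perturbation_im_morse {n : ℕ} {U : Set (Fin n → ℂ)} (hU : IsOpen U)
    {Φ : (Fin n → ℂ) → ℂ} (hΦ : DifferentiableOn ℂ Φ U) :
    ∀ᵐ w : Fin n → ℂ, ∀ p ∈ U,
      fderiv ℝ (fun z => (Φ z - ∑ j, w j * z j).im) p = 0 →
      ∀ X : Fin n → ℂ,
        (∀ Y : Fin n → ℂ,
          iteratedFDeriv ℝ 2 (fun z => (Φ z - ∑ j, w j * z j).im) p ![X, Y] = 0) →
        X = 0 := by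
  classical
  set D : (Fin n → ℂ) → ((Fin n → ℂ) →L[ℂ] ℂ) := fun q => fderiv ℂ Φ q with hDdef
  set Hs : (Fin n → ℂ) → ((Fin n → ℂ) →L[ℂ] ((Fin n → ℂ) →L[ℂ] ℂ)) :=
    fun q => fderiv ℂ D q with hHdef
  set pr : ((Fin n → ℂ) →L[ℂ] ℂ) →L[ℂ] (Fin n → ℂ) :=
    ContinuousLinearMap.pi (fun j => ContinuousLinearMap.apply ℂ ℂ (Pi.single j 1)) with hprdef
  set g : (Fin n → ℂ) → (Fin n → ℂ) := fun q => pr (D q) with hgdef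
  set s : Set (Fin n → ℂ) :=
    {q | q ∈ U ∧ ∃ X : Fin n → ℂ, X ≠ 0 ∧ pr (Hs q X) = 0} with hsdef
  -- Sard-type statement
  have hg' : ∀ q ∈ s, HasFDerivWithinAt g ((pr.comp (Hs q)).restrictScalars ℝ) s q := by
    intro q hq
    have h1 : HasFDerivAt D (Hs q) q := (differentiableAt_fderiv hU hΦ hq.1).hasFDerivAt
    have h2 : HasFDerivAt g (pr.comp (Hs q)) q := pr.hasFDerivAt.comp q h1
    exact (h2.restrictScalars ℝ).hasFDerivWithinAt
  have hdet : ∀ q ∈ s, ((pr.comp (Hs q)).restrictScalars ℝ).det = 0 := by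
    intro q hq
    obtain ⟨hqU, X0, hX0, hker⟩ := hq
    set L : (Fin n → ℂ) →L[ℝ] (Fin n → ℂ) := (pr.comp (Hs q)).restrictScalars ℝ with hL
    have hLX0 : L X0 = 0 := by
      simp only [hL, ContinuousLinearMap.coe_restrictScalars',
        ContinuousLinearMap.coe_comp', Function.comp_apply]
      exact hker
    let b := Module.finBasis ℝ (Fin n → ℂ)
    show LinearMap.det (L : (Fin n → ℂ) →ₗ[ℝ] (Fin n → ℂ)) = 0
    rw [← LinearMap.det_toMatrix b]
    refine Matrix.exists_mulVec_eq_zero_iff.mp ⟨b.repr X0, ?_, ?_⟩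
    · simpa using hX0
    · rw [LinearMap.toMatrix_mulVec_repr]
      simp [hLX0]
  have hnull : volume (g '' s) = 0 :=
    addHaar_image_eq_zero_of_det_fderivWithin_eq_zero volume hg' hdet
  have hae : ∀ᵐ w : Fin n → ℂ, w ∉ g '' s := measure_eq_zero_iff_ae_notMem.mp hnull
  filter_upwards [hae] with w hw
  intro p hp hcrit X hhess
  by_contra hX
  -- the linear functional z ↦ ∑ j, w j * z j
  set Lw : (Fin n → ℂ) →L[ℂ] ℂ :=
    ∑ j, w j • (ContinuousLinearMap.proj j : (Fin n → ℂ) →L[ℂ] ℂ) with hLwdef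
  have hLwapp : ∀ z : Fin n → ℂ, Lw z = ∑ j, w j * z j := by
    intro z
    simp [hLwdef, ContinuousLinearMap.sum_apply, ContinuousLinearMap.smul_apply,
      ContinuousLinearMap.proj_apply, smul_eq_mul]
  have hψeq : (fun z : Fin n → ℂ => (Φ z - ∑ j, w j * z j).im)
      = fun z => Complex.imCLM (Φ z - Lw z) := by
    funext z
    simp [hLwapp]
  -- first derivative of ψ on U
  have hψd : ∀ q ∈ U, HasFDerivAt (fun z : Fin n → ℂ => (Φ z - ∑ j, w j * z j).im)
      (Complex.imCLM.comp ((D q - Lw).restrictScalars ℝ)) q := by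
    intro q hq
    have h1 : HasFDerivAt Φ (D q) q := (hΦ.differentiableAt (hU.mem_nhds hq)).hasFDerivAt
    have h2 : HasFDerivAt (fun z => Φ z - Lw z) (D q - Lw) q := h1.sub Lw.hasFDerivAt
    have h3 := (Complex.imCLM.hasFDerivAt (x := Φ q - Lw q)).comp q (h2.restrictScalars ℝ)
    rw [hψeq]
    exact h3
  -- from criticality : D p = Lw
  have hDp : D p = Lw := by
    have h0 : Complex.imCLM.comp ((D p - Lw).restrictScalars ℝ) = 0 := by
      rw [← (hψd p hp).fderiv]; exact hcrit
    have him : ∀ Z : Fin n → ℂ, ((D p - Lw) Z).im = 0 := by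
      intro Z
      have := ContinuousLinearMap.ext_iff.mp h0 Z
      simpa using this
    have hzero : ∀ Z : Fin n → ℂ, (D p - Lw) Z = 0 := by
      intro Z
      have h1 := him Z
      have h2 := him (Complex.I • Z)
      rw [ContinuousLinearMap.map_smul] at h2
      apply Complex.ext
      · simpa [Complex.smul_re, Complex.smul_im] using h2
      · exact h1
    have : D p - Lw = 0 := ContinuousLinearMap.ext fun Z => hzero Z
    exact sub_eq_zero.mp this
  have hgp : g p = w := by
    funext j
    have : g p j = D p (Pi.single j 1) := by
      simp [hgdef, hprdef, ContinuousLinearMap.pi_apply, ContinuousLinearMap.apply_apply]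
    rw [this, hDp, hLwdef]
    simp [ContinuousLinearMap.sum_apply, ContinuousLinearMap.smul_apply,
      ContinuousLinearMap.proj_apply, smul_eq_mul, Pi.single_apply, Finset.sum_ite_eq']
  -- the second derivative
  set T0 : ((Fin n → ℂ) →L[ℂ] ℂ) →L[ℝ] ((Fin n → ℂ) →L[ℝ] ℝ) :=
    ((ContinuousLinearMap.compL ℝ (Fin n → ℂ) ℂ ℝ) Complex.imCLM).comp
      (ContinuousLinearMap.restrictScalarsL ℂ (Fin n → ℂ) ℂ ℝ ℝ) with hT0def
  have hT0app : ∀ (A : (Fin n → ℂ) →L[ℂ] ℂ) (Z : Fin n → ℂ), T0 A Z = (A Z).im := by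
    intro A Z
    simp [hT0def]
  have hfd1 : fderiv ℝ (fun z : Fin n → ℂ => (Φ z - ∑ j, w j * z j).im)
      =ᶠ[nhds p] fun q => T0 (D q) - T0 Lw := by
    filter_upwards [hU.mem_nhds hp] with q hq
    rw [(hψd q hq).fderiv]
    ext Z
    simp only [ContinuousLinearMap.coe_comp', Function.comp_apply,
      ContinuousLinearMap.coe_restrictScalars', ContinuousLinearMap.sub_apply,
      Complex.imCLM_apply, ContinuousLinearMap.coe_sub', Pi.sub_apply]
    rw [hT0app, hT0app]
    simp [Complex.sub_im]
  have hDR : HasFDerivAt D ((Hs p).restrictScalars ℝ) p :=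
    ((differentiableAt_fderiv hU hΦ hp).hasFDerivAt).restrictScalars ℝ
  have h5 : HasFDerivAt (fun q => T0 (D q) - T0 Lw)
      (T0.comp ((Hs p).restrictScalars ℝ)) p :=
    (T0.hasFDerivAt.comp p hDR).sub_const _
  have hfd2 : fderiv ℝ (fderiv ℝ (fun z : Fin n → ℂ => (Φ z - ∑ j, w j * z j).im)) p
      = T0.comp ((Hs p).restrictScalars ℝ) := by
    rw [Filter.EventuallyEq.fderiv_eq hfd1]
    exact h5.fderiv
  have hsec : ∀ Y : Fin n → ℂ,
      iteratedFDeriv ℝ 2 (fun z : Fin n → ℂ => (Φ z - ∑ j, w j * z j).im) p ![X, Y]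
        = ((Hs p X) Y).im := by
    intro Y
    rw [iteratedFDeriv_two_apply, hfd2]
    simp only [Matrix.cons_val_zero, Matrix.cons_val_one, Matrix.head_cons,
      ContinuousLinearMap.coe_comp', Function.comp_apply,
      ContinuousLinearMap.coe_restrictScalars']
    rw [hT0app]
  have hHX : ∀ Y : Fin n → ℂ, Hs p X Y = 0 := by
    intro Y
    have h1 := (hsec Y).symm.trans (hhess Y)
    have h2 := (hsec (Complex.I • Y)).symm.trans (hhess (Complex.I • Y))
    rw [ContinuousLinearMap.map_smul] at h2
    apply Complex.ext
    · simpa [Complex.smul_re, Complex.smul_im] using h2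
    · exact h1
  refine hw ⟨p, ⟨hp, X, hX, ?_⟩, hgp⟩
  funext j
  simp [hprdef, ContinuousLinearMap.pi_apply, ContinuousLinearMap.apply_apply, hHX]
end
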